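/- arXiv:math/0412141 — 4 statements merged into one kernel-verified Lean document; each statement's English description precedes it below -/
import Mathlib

section
/- Let $(X,d)$ be a metric space and $\mu$ a finite doubling measure on $X$ for which every open set is measurable. Let $E$ be a Borel subset of $X$. Assume there are constants $r_0, c > 0$ such that $\mu(E \cap B) \ge c\, \mu(B)$ for every ball $B$ with radius $r(B) < r_0$ and center in $X$. Then $\mu(E \cap B) = \mu(B)$ for every ball $B$. -/
open MeasureTheory Metric Filter Set
open scoped ENNReal Topology

/-- A dimension function: positive, continuous, nondecreasing on `(0,∞)`, tending to `0` at `0`. -/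
def IsDimFun (f : ℝ → ℝ) : Prop :=
  (∀ r > 0, 0 < f r) ∧ ContinuousOn f (Set.Ioi 0) ∧ MonotoneOn f (Set.Ioi 0) ∧
    Filter.Tendsto f (nhdsWithin 0 (Set.Ioi 0)) (nhds 0)

/-- The Hausdorff measure associated with a dimension function `f`. -/
noncomputable def hmf {X : Type*} [EMetricSpace X] [MeasurableSpace X] [BorelSpace X]
    (f : ℝ → ℝ) : Measure X :=
  MeasureTheory.Measure.mkMetric (fun d => ENNReal.ofReal (f d.toReal))

section aux
variable {X : Type*} [MetricSpace X] [MeasurableSpace X] [BorelSpace X]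

lemma doub_iter (μ : Measure X) {lam : ℝ}
    (hd : ∀ (x : X) (r : ℝ), 0 < r →
      μ (closedBall x (2 * r)) ≤ ENNReal.ofReal lam * μ (closedBall x r)) (x : X) :
    ∀ (n : ℕ) (r : ℝ), 0 < r →
      μ (closedBall x (2 ^ n * r)) ≤ (ENNReal.ofReal lam) ^ n * μ (closedBall x r) := by
  intro n
  induction n with
  | zero => intro r hr; simp
  | succ n ih =>
    intro r hr
    have h1 : (2 : ℝ) ^ (n + 1) * r = 2 ^ n * (2 * r) := by ring
    calc μ (closedBall x (2 ^ (n + 1) * r)) = μ (closedBall x (2 ^ n * (2 * r))) := by rw [h1]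
      _ ≤ (ENNReal.ofReal lam) ^ n * μ (closedBall x (2 * r)) := ih (2 * r) (by linarith)
      _ ≤ (ENNReal.ofReal lam) ^ n * (ENNReal.ofReal lam * μ (closedBall x r)) :=
          mul_le_mul_right (hd x r hr) _
      _ = (ENNReal.ofReal lam) ^ (n + 1) * μ (closedBall x r) := by ring

lemma ball_pos (μ : Measure X) (hμ : μ ≠ 0) {lam : ℝ}
    (hd : ∀ (x : X) (r : ℝ), 0 < r →
      μ (closedBall x (2 * r)) ≤ ENNReal.ofReal lam * μ (closedBall x r))
    (x : X) (r : ℝ) (hr : 0 < r) : 0 < μ (closedBall x r) := by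
  rcases eq_or_ne (μ (closedBall x r)) 0 with h0 | h0
  · exfalso
    apply hμ
    rw [← Measure.measure_univ_eq_zero]
    have hcover : (univ : Set X) ⊆ ⋃ n : ℕ, closedBall x (2 ^ n * r) := by
      intro y _
      obtain ⟨n, hn⟩ := pow_unbounded_of_one_lt (dist y x / r) (one_lt_two (α := ℝ))
      exact mem_iUnion.2 ⟨n, by
        simp only [mem_closedBall]
        rw [div_lt_iff₀ hr] at hn
        linarith⟩
    refine le_antisymm (le_trans (measure_mono hcover) ?_) zero_le
    rw [measure_iUnion_null fun n => ?_]
    have := doub_iter μ hd x n r hr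
    rw [h0, mul_zero] at this
    exact le_antisymm this zero_le
  · exact h0.bot_lt

lemma ball_compare (μ : Measure X) {lam : ℝ}
    (hd : ∀ (x : X) (r : ℝ), 0 < r →
      μ (closedBall x (2 * r)) ≤ ENNReal.ofReal lam * μ (closedBall x r))
    {x0 y : X} {R r : ℝ} (hr : 0 < r) (hy : y ∈ closedBall x0 R) {n : ℕ}
    (hn : 2 * R ≤ 2 ^ n * r) :
    μ (closedBall x0 R) ≤ (ENNReal.ofReal lam) ^ n * μ (closedBall y r) := by
  have hsub : closedBall x0 R ⊆ closedBall y (2 ^ n * r) := by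
    intro z hz
    simp only [mem_closedBall] at *
    have h1 : dist z y ≤ dist z x0 + dist x0 y := dist_triangle z x0 y
    rw [dist_comm x0 y] at h1
    linarith
  exact (measure_mono hsub).trans (doub_iter μ hd y n r hr)

end aux

section sep
variable {X : Type*} [MetricSpace X] [MeasurableSpace X] [BorelSpace X]

lemma sep_of_doubling (μ : Measure X) [IsFiniteMeasure μ] (hμ : μ ≠ 0) {lam : ℝ}
    (hd : ∀ (x : X) (r : ℝ), 0 < r →
      μ (closedBall x (2 * r)) ≤ ENNReal.ofReal lam * μ (closedBall x r)) :
    TopologicalSpace.SeparableSpace X := by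
  cases isEmpty_or_nonempty X with
  | inl h => infer_instance
  | inr h =>
    obtain ⟨x0⟩ := h
    rw [← TopologicalSpace.isSeparable_univ_iff]
    have hcover : (univ : Set X) = ⋃ m : ℕ, closedBall x0 (m + 1) := by
      apply eq_of_subset_of_subset _ (subset_univ _)
      intro y _
      obtain ⟨m, hm⟩ := exists_nat_ge (dist y x0)
      exact mem_iUnion.2 ⟨m, by simp only [mem_closedBall]; linarith⟩
    rw [hcover]
    apply TopologicalSpace.IsSeparable.iUnion
    intro m
    apply TotallyBounded.isSeparable
    by_contra hT
    rw [Metric.totallyBounded_iff] at hT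
    push_neg at hT
    obtain ⟨ε, hε, hnet⟩ := hT
    have hseq : ∀ t : Set X, t.Finite → ∃ c,
        c ∈ closedBall x0 (m + 1) ∧ ∀ y ∈ t, ε ≤ dist c y := by
      intro t ht
      obtain ⟨c, hc1, hc2⟩ := not_subset.1 (hnet t ht)
      refine ⟨c, hc1, fun y hy => ?_⟩
      by_contra hlt
      push_neg at hlt
      exact hc2 (mem_biUnion hy (mem_ball.2 hlt))
    obtain ⟨u, hu⟩ := seq_of_forall_finite_exists hseq
    have humem : ∀ n, u n ∈ closedBall x0 (m + 1) := fun n => (hu n).1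
    have hsep : ∀ {a b : ℕ}, a < b → ε ≤ dist (u b) (u a) := by
      intro a b hab
      exact (hu b).2 (u a) (mem_image_of_mem u hab)
    have hdisj : Pairwise (Function.onFun Disjoint
        (fun n => closedBall (u n) (ε / 3))) := by
      intro a b hab
      have hdist : ε ≤ dist (u a) (u b) := by
        rcases hab.lt_or_gt with hl | hl
        · rw [dist_comm]; exact hsep hl
        · exact hsep hl
      exact closedBall_disjoint_closedBall (by linarith)
    -- uniform lower bound
    obtain ⟨k, hk⟩ := pow_unbounded_of_one_lt ((2 * ((m : ℝ) + 1)) / (ε / 3))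
      (one_lt_two (α := ℝ))
    have hk' : 2 * ((m : ℝ) + 1) ≤ 2 ^ k * (ε / 3) := by
      rw [div_lt_iff₀ (by linarith)] at hk
      linarith
    set L : ℝ≥0∞ := (ENNReal.ofReal lam) ^ k with hL
    have hLt : L ≠ ∞ := ENNReal.pow_ne_top ENNReal.ofReal_ne_top
    set δ : ℝ≥0∞ := μ (closedBall x0 (m + 1)) / L with hδ
    have hδ0 : δ ≠ 0 := by
      apply (ENNReal.div_pos (ball_pos μ hμ hd x0 (m + 1) (by positivity)).ne' hLt).ne'
    have hlow : ∀ n : ℕ, δ ≤ μ (closedBall (u n) (ε / 3)) := by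
      intro n
      apply ENNReal.div_le_of_le_mul
      rw [mul_comm]
      exact ball_compare μ hd (by linarith) (humem n) hk'
    have htop : (∞ : ℝ≥0∞) ≤ μ univ := by
      calc (∞ : ℝ≥0∞) = ∑' _ : ℕ, δ := (ENNReal.tsum_const_eq_top_of_ne_zero hδ0).symm
        _ ≤ ∑' n : ℕ, μ (closedBall (u n) (ε / 3)) := ENNReal.tsum_le_tsum hlow
        _ = μ (⋃ n, closedBall (u n) (ε / 3)) :=
            (measure_iUnion hdisj fun n => measurableSet_closedBall).symm
        _ ≤ μ univ := measure_mono (subset_univ _)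
    exact (measure_ne_top μ univ) (top_le_iff.1 htop)

end sep

/-- Positive local density forces full measure on all balls. -/
theorem stmt2 {X : Type*} [MetricSpace X] [MeasurableSpace X] [BorelSpace X]
    (μ : Measure X) [IsFiniteMeasure μ]
    (hdoub : ∃ lam : ℝ, 1 < lam ∧ ∀ (x : X) (r : ℝ), 0 < r →
      μ (Metric.closedBall x (2 * r)) ≤ ENNReal.ofReal lam * μ (Metric.closedBall x r))
    (E : Set X) (hE : MeasurableSet E)
    (r₀ c : ℝ) (hr₀ : 0 < r₀) (hc : 0 < c)
    (h : ∀ (x : X) (r : ℝ), 0 < r → r < r₀ →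
      ENNReal.ofReal c * μ (Metric.closedBall x r) ≤ μ (E ∩ Metric.closedBall x r)) :
    ∀ (x : X) (r : ℝ), 0 < r → μ (E ∩ Metric.closedBall x r) = μ (Metric.closedBall x r) := by
  intro x r hr
  rcases eq_or_ne μ 0 with h0 | hμ0
  · simp [h0]
  obtain ⟨lam, hlam, hd⟩ := hdoub
  haveI : TopologicalSpace.SeparableSpace X := sep_of_doubling μ hμ0 hd
  haveI : SecondCountableTopology X := UniformSpace.secondCountable_of_separable X
  haveI : IsUnifLocDoublingMeasure μ := by
    refine ⟨⟨lam.toNNReal, ?_⟩⟩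
    filter_upwards [self_mem_nhdsWithin] with ε (hε : ε ∈ Ioi (0 : ℝ)) y
    have h1 := hd y ε hε
    rwa [ENNReal.ofReal] at h1
  have hEc : μ Eᶜ = 0 := by
    have density := IsUnifLocDoublingMeasure.ae_tendsto_measure_inter_div (μ := μ) Eᶜ 1
    have hfalse : ∀ᵐ y ∂μ.restrict Eᶜ, False := by
      filter_upwards [density] with y hy
      have hmem : ∀ᶠ j in 𝓝[>] (0 : ℝ), y ∈ closedBall y (1 * j) := by
        filter_upwards [self_mem_nhdsWithin] with j (hj : j ∈ Ioi (0 : ℝ))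
        have : (0 : ℝ) ≤ 1 * j := by simpa using le_of_lt hj
        exact mem_closedBall_self this
      have h1 : Tendsto (fun j : ℝ => μ (Eᶜ ∩ closedBall y j) / μ (closedBall y j))
          (𝓝[>] 0) (𝓝 1) := hy (fun _ => y) id tendsto_id hmem
      set c' := min c 1 with hc'def
      have hc'0 : 0 < c' := lt_min hc one_pos
      have hc'1 : c' ≤ 1 := min_le_right _ _
      have ha1 : ENNReal.ofReal (1 - c' / 2) < 1 := by
        rw [← ENNReal.ofReal_one]
        exact (ENNReal.ofReal_lt_ofReal_iff one_pos).2 (by linarith)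
      have hev := h1.eventually (eventually_gt_nhds ha1)
      have hev2 : ∀ᶠ j in 𝓝[>] (0 : ℝ), j < r₀ :=
        eventually_nhdsWithin_of_eventually_nhds (eventually_lt_nhds hr₀)
      obtain ⟨s, hs1, hs2, hs3⟩ := (hev.and (hev2.and self_mem_nhdsWithin)).exists
      have hspos : 0 < s := hs3
      set B := closedBall y s with hBdef
      have hB0 : μ B ≠ 0 := (ball_pos μ hμ0 hd y s hspos).ne'
      have hBt : μ B ≠ ∞ := measure_ne_top μ B
      have hgt : ENNReal.ofReal (1 - c' / 2) * μ B < μ (Eᶜ ∩ B) := by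
        calc ENNReal.ofReal (1 - c' / 2) * μ B < (μ (Eᶜ ∩ B) / μ B) * μ B :=
            ENNReal.mul_lt_mul_left hB0 hBt hs1
          _ = μ (Eᶜ ∩ B) := ENNReal.div_mul_cancel hB0 hBt
      have hge : ENNReal.ofReal c' * μ B ≤ μ (E ∩ B) :=
        le_trans (mul_le_mul_left (ENNReal.ofReal_le_ofReal (min_le_left _ _)) _)
          (h y s hspos hs2)
      have hfin : ENNReal.ofReal c' * μ B ≠ ∞ :=
        ENNReal.mul_ne_top ENNReal.ofReal_ne_top hBt
      have hlt : (ENNReal.ofReal c' + ENNReal.ofReal (1 - c' / 2)) * μ B < μ B := by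
        have hsum : μ (E ∩ B) + μ (Eᶜ ∩ B) = μ B := by
          rw [inter_comm E B, inter_comm Eᶜ B, ← diff_eq, measure_inter_add_diff B hE]
        have hlt' : (ENNReal.ofReal c' + ENNReal.ofReal (1 - c' / 2)) * μ B <
            μ (E ∩ B) + μ (Eᶜ ∩ B) := by
          rw [add_mul]
          exact ENNReal.add_lt_add_of_le_of_lt hfin hge hgt
        rwa [hsum] at hlt'
      have hone : (1 : ℝ≥0∞) ≤ ENNReal.ofReal c' + ENNReal.ofReal (1 - c' / 2) := by
        rw [← ENNReal.ofReal_add (le_of_lt hc'0) (by linarith), ← ENNReal.ofReal_one]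
        exact ENNReal.ofReal_le_ofReal (by linarith)
      have : μ B < μ B :=
        lt_of_le_of_lt (by simpa using mul_le_mul_left hone (μ B)) hlt
      exact absurd this (lt_irrefl _)
    rw [eventually_false_iff_eq_bot, ae_eq_bot] at hfalse
    calc μ Eᶜ = (μ.restrict Eᶜ) univ := (Measure.restrict_apply_univ _).symm
      _ = 0 := by rw [hfalse]; rfl
  apply le_antisymm (measure_mono inter_subset_right)
  calc μ (closedBall x r) = μ (closedBall x r ∩ E) + μ (closedBall x r \ E) :=
      (measure_inter_add_diff _ hE).symm
    _ ≤ μ (E ∩ closedBall x r) + μ Eᶜ := by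
        refine add_le_add (le_of_eq (by rw [inter_comm])) (measure_mono fun z hz => hz.2)
    _ = μ (E ∩ closedBall x r) := by rw [hEc, add_zero]
end

section
/- Let $(X,d)$ be a metric space and $\mu$ a finite measure on $X$. Let $B$ be a ball in $X$ and $(E_n)$ a sequence of $\mu$-measurable sets. If there exists a constant $c > 0$ such that $\limsup_{n\to\infty} \mu(B \cap E_n) \ge c\, \mu(B)$, then $\mu(B \cap \limsup_{n\to\infty} E_n) \ge c^2\, \mu(B)$. -/
open MeasureTheory Metric Filter Set
open scoped ENNReal Topology

/-- Reverse Fatou lemma for sets and a finite measure. -/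
lemma limsup_measure_le_measure_limsup' {X : Type*} [MeasurableSpace X]
    (ν : Measure X) [IsFiniteMeasure ν] (E : ℕ → Set X) (hE : ∀ n, MeasurableSet (E n)) :
    Filter.limsup (fun n => ν (E n)) Filter.atTop ≤ ν (Filter.limsup E Filter.atTop) := by
  set s : ℕ → Set X := fun j => ⋃ n, ⋃ (_ : j ≤ n), E n with hs
  have hanti : Antitone s := fun i j hij =>
    Set.iUnion₂_subset fun n hn => Set.subset_iUnion₂ (s := fun n _ => E n) n (hij.trans hn)
  have hlimsup : Filter.limsup E Filter.atTop = ⋂ j, s j := by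
    rw [limsup_eq_iInf_iSup_of_nat]
    simp only [hs, Set.iInf_eq_iInter, Set.iSup_eq_iUnion]
  have hmeas : ∀ j, NullMeasurableSet (s j) ν := fun j =>
    (MeasurableSet.iUnion fun n => MeasurableSet.iUnion fun _ => hE n).nullMeasurableSet
  have hdir : Directed (· ⊇ ·) s := hanti.directed_ge
  have h1 : ν (⋂ j, s j) = ⨅ j, ν (s j) :=
    Directed.measure_iInter hmeas hdir ⟨0, measure_ne_top ν _⟩
  rw [hlimsup, h1, limsup_eq_iInf_iSup_of_nat]
  refine iInf_mono fun j => iSup₂_le fun n hn => measure_mono ?_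
  exact Set.subset_iUnion₂ (s := fun n _ => E n) n hn

/-- Positive limsup of measures of intersections gives positive measure of the limsup set. -/
theorem stmt3 {X : Type*} [MetricSpace X] [MeasurableSpace X]
    (μ : Measure X) [IsFiniteMeasure μ]
    (x₀ : X) (R : ℝ) (E : ℕ → Set X) (hE : ∀ n, MeasurableSet (E n))
    (c : ℝ) (hc : 0 < c)
    (h : ENNReal.ofReal c * μ (Metric.closedBall x₀ R) ≤
      Filter.limsup (fun n => μ (Metric.closedBall x₀ R ∩ E n)) Filter.atTop) :
    ENNReal.ofReal c ^ 2 * μ (Metric.closedBall x₀ R) ≤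
      μ (Metric.closedBall x₀ R ∩ Filter.limsup E Filter.atTop) := by
  set B := Metric.closedBall x₀ R with hB
  set ν := μ.restrict B with hν
  have hlimmeas : MeasurableSet (Filter.limsup E Filter.atTop) :=
    MeasurableSet.measurableSet_limsup hE
  have hrest : ∀ (s : Set X), MeasurableSet s → ν s = μ (B ∩ s) := by
    intro s hsm
    rw [hν, Measure.restrict_apply hsm, Set.inter_comm]
  have key : Filter.limsup (fun n => μ (B ∩ E n)) Filter.atTop ≤ μ (B ∩ Filter.limsup E Filter.atTop) := by
    rw [← hrest _ hlimmeas]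
    calc Filter.limsup (fun n => μ (B ∩ E n)) Filter.atTop
        = Filter.limsup (fun n => ν (E n)) Filter.atTop := by
          congr 1; funext n; rw [hrest _ (hE n)]
      _ ≤ ν (Filter.limsup E Filter.atTop) := limsup_measure_le_measure_limsup' ν E hE
  have main : ENNReal.ofReal c * μ B ≤ μ (B ∩ Filter.limsup E Filter.atTop) := h.trans key
  rcases eq_or_ne (μ B) 0 with h0 | h0
  · rw [h0, mul_zero]; exact zero_le
  · -- show ENNReal.ofReal c ≤ 1
    have hle : Filter.limsup (fun n => μ (B ∩ E n)) Filter.atTop ≤ μ B := by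
      refine Filter.limsup_le_of_le (by isBoundedDefault) ?_
      exact Filter.Eventually.of_forall fun n => measure_mono Set.inter_subset_left
    have hcB : ENNReal.ofReal c * μ B ≤ 1 * μ B := by
      rw [one_mul]; exact h.trans hle
    have hc1 : ENNReal.ofReal c ≤ 1 :=
      (ENNReal.mul_le_mul_iff_left h0 (measure_ne_top μ B)).mp hcB
    calc ENNReal.ofReal c ^ 2 * μ B = ENNReal.ofReal c * (ENNReal.ofReal c * μ B) := by ring
      _ ≤ 1 * (ENNReal.ofReal c * μ B) := by gcongr
      _ = ENNReal.ofReal c * μ B := one_mul _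
      _ ≤ _ := main
end

section
/- ($K_{G,B}$ covering lemma) Let $(B_i)_{i\in\mathbb{N}}$ be a sequence of balls in $\mathbb{R}^k$ with $r(B_i) \to 0$, and let $f$ be a dimension function such that for every ball $B$, $\mathcal{H}^k(B \cap \limsup_i B_i^f) = \mathcal{H}^k(B)$. Then there exists an absolute constant $\kappa > 0$ (depending only on $k$ and the comparability constants between $\mathcal{H}^k$ and volume) such that for every ball $B$ and every $G > 1$, there is a finite subcollection $K_{G,B} \subseteq \{B_i : i \ge G\}$ such that the balls $\{B_i^f : B_i \in K_{G,B}\}$ are pairwise disjoint, contained in $B$, and satisfy $\mathcal{H}^k\big(\bigcup_{L \in K_{G,B}} L^f\big) \ge \kappa\, \mathcal{H}^k(B)$. -/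
open MeasureTheory Metric Filter Set
open scoped ENNReal Topology NNReal

/-- The K_{G,B} covering lemma. -/
theorem stmt6 (k : ℕ) (hk : 0 < k)
    (x : ℕ → EuclideanSpace ℝ (Fin k)) (r : ℕ → ℝ) (hrpos : ∀ i, 0 < r i)
    (hr : Filter.Tendsto r Filter.atTop (nhds 0))
    (f : ℝ → ℝ) (hf : IsDimFun f)
    (H : ∀ (x₀ : EuclideanSpace ℝ (Fin k)) (R : ℝ), 0 < R →
      μH[(k : ℝ)] (Metric.closedBall x₀ R ∩
        Filter.limsup (fun i => Metric.closedBall (x i) ((f (r i)) ^ ((1 : ℝ) / k)))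
          Filter.atTop) = μH[(k : ℝ)] (Metric.closedBall x₀ R)) :
    ∃ κ : ℝ, 0 < κ ∧
      ∀ (x₀ : EuclideanSpace ℝ (Fin k)) (R : ℝ), 0 < R → ∀ G : ℕ, 1 < G →
        ∃ S : Finset ℕ,
          (∀ i ∈ S, G ≤ i) ∧
          ((S : Set ℕ).Pairwise fun i j =>
            Disjoint (Metric.closedBall (x i) ((f (r i)) ^ ((1 : ℝ) / k)))
              (Metric.closedBall (x j) ((f (r j)) ^ ((1 : ℝ) / k)))) ∧
          (∀ i ∈ S, Metric.closedBall (x i) ((f (r i)) ^ ((1 : ℝ) / k)) ⊆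
            Metric.closedBall x₀ R) ∧
          ENNReal.ofReal κ * μH[(k : ℝ)] (Metric.closedBall x₀ R) ≤
            μH[(k : ℝ)] (⋃ i ∈ S, Metric.closedBall (x i) ((f (r i)) ^ ((1 : ℝ) / k))) := by
  classical
  have hfin : Module.finrank ℝ (EuclideanSpace ℝ (Fin k)) = k := finrank_euclideanSpace_fin
  set μ : Measure (EuclideanSpace ℝ (Fin k)) := μH[(k : ℝ)] with hμdef
  haveI hHaar : μ.IsAddHaarMeasure := by
    have h : μ = μH[((Module.finrank ℝ (EuclideanSpace ℝ (Fin k)) : ℕ) : ℝ)] := by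
      rw [hfin]
    rw [h]; exact isAddHaarMeasure_hausdorffMeasure
  set m0 : ℝ≥0∞ := μ (ball (0 : EuclideanSpace ℝ (Fin k)) 1) with hm0def
  have hm0pos : 0 < m0 := measure_ball_pos μ _ one_pos
  have hm0top : m0 < ⊤ :=
    lt_of_le_of_lt (measure_mono ball_subset_closedBall) measure_closedBall_lt_top
  have hball : ∀ (c : EuclideanSpace ℝ (Fin k)) {ρ : ℝ}, 0 ≤ ρ →
      μ (closedBall c ρ) = ENNReal.ofReal (ρ ^ k) * m0 := by
    intro c ρ hρ
    rw [Measure.addHaar_closedBall μ c hρ, hfin, hm0def]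
  set ρ : ℕ → ℝ := fun i => f (r i) ^ ((1 : ℝ) / k) with hρdef
  have hk' : (0 : ℝ) < 1 / k := by positivity
  have hρpos : ∀ i, 0 < ρ i := fun i => Real.rpow_pos_of_pos (hf.1 _ (hrpos i)) _
  have hρ0 : Tendsto ρ atTop (𝓝 0) := by
    have h1 : Tendsto r atTop (𝓝[>] (0 : ℝ)) :=
      tendsto_nhdsWithin_iff.2 ⟨hr, Eventually.of_forall fun i => hrpos i⟩
    have h2 : Tendsto (fun i => f (r i)) atTop (𝓝 0) := hf.2.2.2.comp h1
    have h3 : ContinuousAt (fun y : ℝ => y ^ ((1 : ℝ) / k)) 0 :=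
      Real.continuousAt_rpow_const 0 _ (Or.inr hk'.le)
    have h4 : Tendsto (fun i => f (r i) ^ ((1 : ℝ) / k)) atTop (𝓝 ((0 : ℝ) ^ ((1 : ℝ) / k))) :=
      h3.tendsto.comp h2
    rwa [Real.zero_rpow hk'.ne'] at h4
  refine ⟨(1 / 2) ^ (k + 1), by positivity, ?_⟩
  intro x₀ R hR G hG
  set t : Set (ℕ × EuclideanSpace ℝ (Fin k)) :=
    {p | G ≤ p.1 ∧ p.2 ∈ closedBall (x p.1) (ρ p.1) ∧
      closedBall (x p.1) (ρ p.1) ⊆ closedBall x₀ R} with htdef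
  set Bf : ℕ × EuclideanSpace ℝ (Fin k) → Set (EuclideanSpace ℝ (Fin k)) :=
    fun p => closedBall (x p.1) (ρ p.1) with hBdef
  set s : Set (EuclideanSpace ℝ (Fin k)) :=
    closedBall x₀ (R / 2) ∩
      limsup (fun i => closedBall (x i) ((f (r i)) ^ ((1 : ℝ) / k))) atTop with hsdef
  have hμs : μ s = ENNReal.ofReal ((R / 2) ^ k) * m0 := by
    rw [hsdef, H x₀ (R / 2) (by positivity)]
    exact hball x₀ (by positivity)
  have hB : ∀ p ∈ t, Bf p ⊆ closedBall p.2 (2 * ρ p.1) := by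
    intro p hp z hz
    have h1 : dist p.2 (x p.1) ≤ ρ p.1 := mem_closedBall.1 hp.2.1
    have h2 : dist z (x p.1) ≤ ρ p.1 := mem_closedBall.1 hz
    have h3 := dist_triangle z (x p.1) p.2
    rw [dist_comm (x p.1) p.2] at h3
    rw [mem_closedBall]
    have h4 := dist_triangle z (x p.1) p.2
    rw [dist_comm p.2 (x p.1)] at h1
    linarith
  have h7 : ((7 ^ k : ℝ≥0) : ℝ≥0∞) = ENNReal.ofReal ((7 : ℝ) ^ k) := by
    rw [ENNReal.ofReal_pow (by norm_num)]
    norm_num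
  have hμB : ∀ p ∈ t, μ (closedBall p.2 (3 * (2 * ρ p.1))) ≤ (7 ^ k : ℝ≥0) * μ (Bf p) := by
    intro p hp
    have h1 : dist p.2 (x p.1) ≤ ρ p.1 := mem_closedBall.1 hp.2.1
    have hsub : closedBall p.2 (3 * (2 * ρ p.1)) ⊆ closedBall (x p.1) (7 * ρ p.1) := by
      intro z hz
      have h2 : dist z p.2 ≤ 3 * (2 * ρ p.1) := mem_closedBall.1 hz
      have h3 := dist_triangle z p.2 (x p.1)
      rw [mem_closedBall]
      linarith
    calc μ (closedBall p.2 (3 * (2 * ρ p.1)))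
        ≤ μ (closedBall (x p.1) (7 * ρ p.1)) := measure_mono hsub
      _ = ENNReal.ofReal ((7 * ρ p.1) ^ k) * m0 := hball _ (by nlinarith [hρpos p.1])
      _ = (7 ^ k : ℝ≥0) * (ENNReal.ofReal ((ρ p.1) ^ k) * m0) := by
          rw [mul_pow, ENNReal.ofReal_mul (by positivity), h7, mul_assoc]
      _ = (7 ^ k : ℝ≥0) * μ (Bf p) := by rw [hball _ (hρpos p.1).le]
  have hint : ∀ p ∈ t, (interior (Bf p)).Nonempty := by
    intro p _
    exact ⟨x p.1, ball_subset_interior_closedBall (mem_ball_self (hρpos p.1))⟩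
  have hfine : ∀ y ∈ s, ∀ ε > (0 : ℝ), ∃ a ∈ t, 2 * ρ a.1 ≤ ε ∧ a.2 = y := by
    intro y hy ε hε
    obtain ⟨hy1, hy2⟩ := hy
    have hfreq : ∃ᶠ i in atTop, y ∈ closedBall (x i) (ρ i) :=
      Filter.mem_limsup_iff_frequently_mem.1 hy2
    have hmin : (0 : ℝ) < min (ε / 2) (R / 4) := lt_min (by positivity) (by positivity)
    have hsmall : ∀ᶠ i in atTop, ρ i < min (ε / 2) (R / 4) :=
      hρ0.eventually_lt_const hmin
    obtain ⟨i, hyi, hρi, hGi⟩ :=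
      (hfreq.and_eventually (hsmall.and (eventually_ge_atTop G))).exists
    have hρε : ρ i ≤ ε / 2 := le_of_lt (lt_of_lt_of_le hρi (min_le_left _ _))
    have hρR : ρ i ≤ R / 4 := le_of_lt (lt_of_lt_of_le hρi (min_le_right _ _))
    refine ⟨(i, y), ⟨hGi, hyi, ?_⟩, by dsimp only; linarith, rfl⟩
    intro z hz
    have h1 : dist z (x i) ≤ ρ i := mem_closedBall.1 hz
    have h2 : dist y (x i) ≤ ρ i := mem_closedBall.1 hyi
    have h3 : dist y x₀ ≤ R / 2 := mem_closedBall.1 hy1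
    have h4 := dist_triangle4 z (x i) y x₀
    rw [dist_comm (x i) y] at h4
    rw [mem_closedBall]
    linarith
  obtain ⟨u, hut, hucount, hudisj, hucov⟩ :=
    Vitali.exists_disjoint_covering_ae μ s t (7 ^ k) (fun p => 2 * ρ p.1) Prod.snd Bf hB hμB hint
      (fun p _ => isClosed_closedBall) hfine
  have hμsU : μ s ≤ μ (⋃ a ∈ u, Bf a) := by
    calc μ s ≤ μ ((s \ ⋃ a ∈ u, Bf a) ∪ ⋃ a ∈ u, Bf a) := by
          refine measure_mono ?_
          intro z hz
          by_cases h : z ∈ ⋃ a ∈ u, Bf a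
          · exact Or.inr h
          · exact Or.inl ⟨hz, h⟩
      _ ≤ μ (s \ ⋃ a ∈ u, Bf a) + μ (⋃ a ∈ u, Bf a) := measure_union_le _ _
      _ = μ (⋃ a ∈ u, Bf a) := by rw [hucov, zero_add]
  have hμspos : 0 < μ s := by
    rw [hμs]
    exact ENNReal.mul_pos (ENNReal.ofReal_pos.2 (by positivity)).ne' hm0pos.ne'
  have hune : u.Nonempty := by
    rcases u.eq_empty_or_nonempty with h | h
    · exfalso
      rw [h] at hμsU
      simp only [Set.mem_empty_iff_false, Set.iUnion_of_empty, Set.iUnion_empty,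
        measure_empty, le_zero_iff] at hμsU
      exact hμspos.ne' hμsU
    · exact h
  obtain ⟨e, hue⟩ := hucount.exists_eq_range hune
  have hem : ∀ m, e m ∈ u := fun m => by rw [hue]; exact mem_range_self m
  have hUeq : (⋃ a ∈ u, Bf a) = ⋃ n, Bf (e n) := by rw [hue, biUnion_range]
  have htend : Tendsto (fun n => μ (accumulate (fun m => Bf (e m)) n)) atTop
      (𝓝 (μ (⋃ n, Bf (e n)))) := by
    have h := tendsto_measure_iUnion_atTop (μ := μ)
      (monotone_accumulate (s := fun m => Bf (e m)))
    rwa [iUnion_accumulate] at h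
  have hRk : μ (closedBall x₀ R) = ENNReal.ofReal (R ^ k) * m0 := hball x₀ hR.le
  have hlt : ENNReal.ofReal ((1 / 2) ^ (k + 1)) * μ (closedBall x₀ R)
      < μ (⋃ n, Bf (e n)) := by
    refine lt_of_lt_of_le ?_ (hUeq ▸ hμsU)
    rw [hμs, hRk, ← mul_assoc, ← ENNReal.ofReal_mul (by positivity)]
    refine ENNReal.mul_lt_mul_left hm0pos.ne' hm0top.ne ?_
    rw [ENNReal.ofReal_lt_ofReal_iff (by positivity)]
    have h1 : ((1 : ℝ) / 2) ^ (k + 1) < (1 / 2) ^ k :=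
      pow_lt_pow_right_of_lt_one₀ (by norm_num) (by norm_num) (Nat.lt_succ_self k)
    have h2 : ((R : ℝ) / 2) ^ k = (1 / 2) ^ k * R ^ k := by
      rw [div_pow, div_pow]; ring
    rw [h2]
    exact mul_lt_mul_of_pos_right h1 (by positivity)
  obtain ⟨n, hn⟩ := (htend.eventually_const_lt hlt).exists
  refine ⟨Finset.image (fun m => (e m).1) (Finset.range (n + 1)), ?_, ?_, ?_, ?_⟩
  · intro i hi
    obtain ⟨m, _, rfl⟩ := Finset.mem_image.1 hi
    exact (hut (hem m)).1
  · intro i hi j hj hij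
    obtain ⟨m, _, rfl⟩ := Finset.mem_image.1 (Finset.mem_coe.1 hi)
    obtain ⟨m', _, rfl⟩ := Finset.mem_image.1 (Finset.mem_coe.1 hj)
    have hne : e m ≠ e m' := fun h => hij (by rw [h])
    exact hudisj (hem m) (hem m') hne
  · intro i hi
    obtain ⟨m, _, rfl⟩ := Finset.mem_image.1 hi
    exact (hut (hem m)).2.2
  · have hsub : accumulate (fun m => Bf (e m)) n ⊆
        ⋃ i ∈ Finset.image (fun m => (e m).1) (Finset.range (n + 1)),
          closedBall (x i) ((f (r i)) ^ ((1 : ℝ) / k)) := by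
      intro z hz
      obtain ⟨m, hm, hzm⟩ := Set.mem_iUnion₂.1 hz
      exact Set.mem_biUnion
        (Finset.mem_image.2 ⟨m, Finset.mem_range.2 (Nat.lt_succ_of_le hm), rfl⟩) hzm
    exact le_of_lt (lt_of_lt_of_le hn (measure_mono hsub))
end

section
/- (Converse to the $K_{G,B}$ lemma) Let $(B_i)_{i\in\mathbb{N}}$ be a sequence of balls in $\mathbb{R}^k$ with $r(B_i) \to 0$, and $f$ a dimension function. Suppose there is a constant $\kappa > 0$ such that for every ball $B$ and every $G > 1$ there is a finite subcollection $K_{G,B} \subseteq \{B_i : i \ge G\}$ with the balls $\{L^f : L \in K_{G,B}\}$ pairwise disjoint, contained in $B$, and with $\mathcal{H}^k(\bigcup_{L \in K_{G,B}} L^f) \ge \kappa\, \mathcal{H}^k(B)$. Then for every ball $B$, $\mathcal{H}^k(B \cap \limsup_{i\to\infty} B_i^f) = \mathcal{H}^k(B)$. -/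
open MeasureTheory Metric Filter Set
open scoped ENNReal Topology

open scoped NNReal

lemma hmeas_ball_aux (k : ℕ) (hk : 0 < k) (z : EuclideanSpace ℝ (Fin k)) (R : ℝ) (hR : 0 < R) :
    μH[(k:ℝ)] (closedBall z R) ≠ 0 ∧ μH[(k:ℝ)] (closedBall z R) ≠ ∞ := by
  have hvol : (μH[(k:ℝ)] : Measure (Fin k → ℝ)) = volume := by
    simpa [Fintype.card_fin] using (hausdorffMeasure_pi_real (ι := Fin k))
  set e := WithLp.equiv 2 (Fin k → ℝ) with he
  have hL : LipschitzWith 1 e := PiLp.lipschitzWith_ofLp 2 _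
  have hA : AntilipschitzWith ((Fintype.card (Fin k) : ℝ≥0) ^ (1 / (2:ℝ≥0∞)).toReal) e :=
    PiLp.antilipschitzWith_ofLp 2 _
  set C : ℝ≥0 := (Fintype.card (Fin k) : ℝ≥0) ^ (1 / (2:ℝ≥0∞)).toReal with hC
  have hCpos : 0 < C := by
    apply NNReal.rpow_pos
    simpa [Fintype.card_fin] using hk
  have hd : (0:ℝ) ≤ (k:ℝ) := Nat.cast_nonneg k
  constructor
  · -- positivity
    have hsub : closedBall (e z) (R / C) ⊆ e '' closedBall z R := by
      intro y hy
      refine ⟨(WithLp.equiv 2 (Fin k → ℝ)).symm y, ?_, by simp [he]⟩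
      rw [mem_closedBall] at hy ⊢
      calc dist ((WithLp.equiv 2 (Fin k → ℝ)).symm y) z
          ≤ C * dist (e ((WithLp.equiv 2 (Fin k → ℝ)).symm y)) (e z) := hA.le_mul_dist _ _
        _ = C * dist y (e z) := by simp [he]
        _ ≤ C * (R / C) := by
            exact mul_le_mul_of_nonneg_left hy (by positivity)
        _ = R := by field_simp
    have h1 : (0:ℝ≥0∞) < μH[(k:ℝ)] (e '' closedBall z R) := by
      calc (0:ℝ≥0∞) < μH[(k:ℝ)] (closedBall (e z) (R / C)) := by
            rw [hvol]
            exact measure_closedBall_pos volume _ (by positivity)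
        _ ≤ _ := measure_mono hsub
    have h2 := hL.hausdorffMeasure_image_le hd (closedBall z R)
    simp only [ENNReal.coe_one, ENNReal.one_rpow, one_mul] at h2
    exact (h1.trans_le h2).ne'
  · -- finiteness
    have h1 : μH[(k:ℝ)] (closedBall z R) ≤ (C : ℝ≥0∞) ^ (k:ℝ) *
        μH[(k:ℝ)] (e '' closedBall z R) := hA.le_hausdorffMeasure_image hd _
    have h2 : e '' closedBall z R ⊆ closedBall (e z) R := by
      intro y hy
      obtain ⟨w, hw, rfl⟩ := hy
      rw [mem_closedBall] at hw ⊢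
      calc dist (e w) (e z) ≤ 1 * dist w z := hL.dist_le_mul w z
        _ ≤ R := by simpa using hw
    have h3 : μH[(k:ℝ)] (e '' closedBall z R) < ∞ := by
      apply lt_of_le_of_lt (measure_mono h2)
      rw [hvol]
      exact (isCompact_closedBall _ _).measure_lt_top
    refine (lt_of_le_of_lt h1 (ENNReal.mul_lt_top ?_ h3)).ne
    exact ENNReal.rpow_lt_top_of_nonneg hd ENNReal.coe_ne_top

/-- Converse to the K_{G,B} covering lemma. -/
theorem stmt7 (k : ℕ) (hk : 0 < k)
    (x : ℕ → EuclideanSpace ℝ (Fin k)) (r : ℕ → ℝ) (hrpos : ∀ i, 0 < r i)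
    (hr : Filter.Tendsto r Filter.atTop (nhds 0))
    (f : ℝ → ℝ) (hf : IsDimFun f)
    (κ : ℝ) (hκ : 0 < κ)
    (H : ∀ (x₀ : EuclideanSpace ℝ (Fin k)) (R : ℝ), 0 < R → ∀ G : ℕ, 1 < G →
        ∃ S : Finset ℕ,
          (∀ i ∈ S, G ≤ i) ∧
          ((S : Set ℕ).Pairwise fun i j =>
            Disjoint (Metric.closedBall (x i) ((f (r i)) ^ ((1 : ℝ) / k)))
              (Metric.closedBall (x j) ((f (r j)) ^ ((1 : ℝ) / k)))) ∧
          (∀ i ∈ S, Metric.closedBall (x i) ((f (r i)) ^ ((1 : ℝ) / k)) ⊆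
            Metric.closedBall x₀ R) ∧
          ENNReal.ofReal κ * μH[(k : ℝ)] (Metric.closedBall x₀ R) ≤
            μH[(k : ℝ)] (⋃ i ∈ S, Metric.closedBall (x i) ((f (r i)) ^ ((1 : ℝ) / k)))) :
    ∀ (x₀ : EuclideanSpace ℝ (Fin k)) (R : ℝ), 0 < R →
      μH[(k : ℝ)] (Metric.closedBall x₀ R ∩
        Filter.limsup (fun i => Metric.closedBall (x i) ((f (r i)) ^ ((1 : ℝ) / k)))
          Filter.atTop) = μH[(k : ℝ)] (Metric.closedBall x₀ R) := by
  intro x₀ R hR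
  set μ : Measure (EuclideanSpace ℝ (Fin k)) := μH[(k:ℝ)] with hμ
  set b : ℕ → Set (EuclideanSpace ℝ (Fin k)) :=
    fun i => Metric.closedBall (x i) ((f (r i)) ^ ((1 : ℝ) / k)) with hb
  haveI : IsLocallyFiniteMeasure μ :=
    ⟨fun z => ⟨closedBall z 1, closedBall_mem_nhds z one_pos,
      lt_top_iff_ne_top.2 (hmeas_ball_aux k hk z 1 one_pos).2⟩⟩
  set A : ℕ → Set (EuclideanSpace ℝ (Fin k)) := fun G => ⋃ i, ⋃ (_ : G ≤ i), b i with hA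
  have hAmeas : ∀ G, MeasurableSet (A G) := fun G =>
    MeasurableSet.iUnion fun i => MeasurableSet.iUnion fun _ => measurableSet_closedBall
  -- key density bound
  have key : ∀ G : ℕ, 1 < G → ∀ z (ρ : ℝ), 0 < ρ →
      ENNReal.ofReal κ * μ (closedBall z ρ) ≤ μ (A G ∩ closedBall z ρ) := by
    intro G hG z ρ hρ
    obtain ⟨S, hSG, -, hsub, hmeas⟩ := H z ρ hρ G hG
    refine hmeas.trans (measure_mono ?_)
    intro y hy
    simp only [mem_iUnion, exists_prop] at hy
    obtain ⟨i, hiS, hyi⟩ := hy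
    exact ⟨mem_iUnion.2 ⟨i, mem_iUnion.2 ⟨hSG i hiS, hyi⟩⟩, hsub i hiS hyi⟩
  -- complement of A G is null
  have hnull : ∀ G : ℕ, 1 < G → μ (A G)ᶜ = 0 := by
    intro G hG
    by_contra hc
    set s := (A G)ᶜ with hs
    have hsm : MeasurableSet s := (hAmeas G).compl
    have hae := Besicovitch.ae_tendsto_measure_inter_div_of_measurableSet μ hsm
    set t := {y | Tendsto (fun ρ => μ (s ∩ closedBall y ρ) / μ (closedBall y ρ)) (𝓝[>] 0)
      (𝓝 (s.indicator 1 y))} with ht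
    have hmt : μ tᶜ = 0 := hae
    have hne : (s ∩ t).Nonempty := by
      rcases (s ∩ t).eq_empty_or_nonempty with h | h
      · exfalso
        apply hc
        have : s ⊆ tᶜ := fun y hy hyt => (eq_empty_iff_forall_notMem.1 h y) ⟨hy, hyt⟩
        exact le_antisymm (le_trans (measure_mono this) hmt.le) (zero_le ..)
      · exact h
    obtain ⟨y, hys, hyt⟩ := hne
    rw [mem_setOf_eq, indicator_of_mem hys] at hyt
    simp only [Pi.one_apply] at hyt
    set c : ℝ := min κ (1/2) with hcdef
    have hc0 : 0 < c := lt_min hκ (by norm_num)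
    have hc1 : c < 1 := lt_of_le_of_lt (min_le_right _ _) (by norm_num)
    have hbound : ∀ᶠ ρ in 𝓝[>] (0:ℝ),
        μ (s ∩ closedBall y ρ) / μ (closedBall y ρ) ≤ ENNReal.ofReal (1 - c) := by
      filter_upwards [self_mem_nhdsWithin] with ρ hρ
      rw [mem_Ioi] at hρ
      set B' := closedBall y ρ with hB'
      obtain ⟨hm0, hmtop⟩ := hmeas_ball_aux k hk y ρ hρ
      have h1 : ENNReal.ofReal c * μ B' ≤ μ (A G ∩ B') :=
        le_trans (mul_le_mul' (ENNReal.ofReal_le_ofReal (min_le_left _ _)) le_rfl)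
          (key G hG y ρ hρ)
      have h2 : μ (s ∩ B') + ENNReal.ofReal c * μ B' ≤ μ B' := by
        refine le_trans (add_le_add le_rfl h1) ?_
        rw [← measure_union (disjoint_compl_left.mono inter_subset_left inter_subset_left)
          ((hAmeas G).inter measurableSet_closedBall)]
        exact measure_mono (union_subset inter_subset_right inter_subset_right)
      rw [ENNReal.div_le_iff hm0 hmtop]
      have h3 : ENNReal.ofReal (1 - c) * μ B' + ENNReal.ofReal c * μ B' = μ B' := by
        rw [← add_mul, ← ENNReal.ofReal_add (by linarith) hc0.le]
        norm_num
      calc μ (s ∩ B') ≤ μ B' - ENNReal.ofReal c * μ B' := by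
            exact ENNReal.le_sub_of_add_le_right
              (ENNReal.mul_ne_top ENNReal.ofReal_ne_top hmtop) h2
        _ ≤ ENNReal.ofReal (1 - c) * μ B' := by
            rw [tsub_le_iff_right, h3]
      -- done
    have hle : (1:ℝ≥0∞) ≤ ENNReal.ofReal (1 - c) := le_of_tendsto hyt hbound
    have : ENNReal.ofReal (1 - c) < 1 := by
      rw [← ENNReal.ofReal_one]
      exact ENNReal.ofReal_lt_ofReal_iff_of_nonneg (by linarith) |>.2 (by linarith)
    exact absurd hle (not_le.2 this)
  -- limsup has full measure
  have hlimsup : limsup b atTop = ⋂ G, A G := limsup_eq_iInf_iSup_of_nat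
  have hLnull : μ (limsup b atTop)ᶜ = 0 := by
    rw [hlimsup, compl_iInter]
    refine measure_iUnion_null fun G => ?_
    have hmono : (A G)ᶜ ⊆ (A (max G 2))ᶜ := by
      apply compl_subset_compl.2
      exact iUnion₂_subset fun i hi => subset_iUnion₂ (s := fun i _ => b i) i
        (le_trans (le_max_left _ _) hi)
    exact le_antisymm (le_trans (measure_mono hmono)
      (hnull (max G 2) (lt_of_lt_of_le one_lt_two (le_max_right _ _))).le) (zero_le ..)
  exact measure_inter_conull hLnull
end
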